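/- Group privacy step for ADP: if for all adjacent dataset pairs the mechanism M satisfies D̃_α(M(D₁)‖M(D₂)) ≤ ε with α > 2, then for datasets D₁, D₃ differing in at most 2 entries (connected through an intermediate dataset D₂), one has D̃_{α/2}(M(D₁)‖M(D₃)) ≤ [α(α−1) / ((α/2)(α/2 − 1))]·ε, under the absolute continuity chain λ ≪ P ≪ Q ≪ R ≪ λ for the induced output measures. -/

import Mathlib

open MeasureTheory
open scoped ENNReal

/-- Group privacy step for ADP. Let `P = M(D₁)`, `R = M(D₂)`, `Q = M(D₃)` be the
output laws of a mechanism on datasets with `D₁ ~ D₂` and `D₂ ~ D₃` (so `D₁, D₃` differ in at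
most 2 entries), satisfying the absolute continuity chain `λ ≪ P ≪ Q ≪ R ≪ λ`. If the
mechanism satisfies `(α, ε)`-ADP on adjacent pairs, i.e. `D̃_α(P‖R) ≤ ε` and `D̃_α(R‖Q) ≤ ε`
with `α > 2`, then `D̃_{α/2}(P‖Q) ≤ (α(α−1)/((α/2)(α/2 − 1)))·ε`, where
`D̃_β(P‖Q) = (∫ (dP/dQ)^β dQ − 1)/(β(β−1))`. -/
theorem group_privacy_step_ADP
    {X : Type*} [MeasureSpace X] (P Q R : Measure X)
    [IsProbabilityMeasure P] [IsProbabilityMeasure Q] [IsProbabilityMeasure R]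
    (hlamP : (volume : Measure X) ≪ P) (hPQ : P ≪ Q) (hQR : Q ≪ R)
    (hRlam : R ≪ (volume : Measure X))
    (α ε : ℝ) (hα : 2 < α) (hε : 0 ≤ ε)
    (hPR : ((∫⁻ x, (P.rnDeriv R x) ^ α ∂ R) - 1) / ENNReal.ofReal (α * (α - 1))
        ≤ ENNReal.ofReal ε)
    (hRQ : ((∫⁻ x, (R.rnDeriv Q x) ^ α ∂Q) - 1) / ENNReal.ofReal (α * (α - 1))
        ≤ ENNReal.ofReal ε) :
    ((∫⁻ x, (P.rnDeriv Q x) ^ (α / 2) ∂Q) - 1)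
        / ENNReal.ofReal ((α / 2) * (α / 2 - 1))
      ≤ ENNReal.ofReal ((α * (α - 1)) / ((α / 2) * (α / 2 - 1)) * ε) := by
  have hPRac : P ≪ R := hPQ.trans hQR
  have hRQac : R ≪ Q := (hRlam.trans hlamP).trans hPQ
  set f := P.rnDeriv R with hfdef
  set g := R.rnDeriv Q with hgdef
  have hfm : Measurable f := Measure.measurable_rnDeriv _ _
  have hgm : Measurable g := Measure.measurable_rnDeriv _ _
  have hc0 : (0:ℝ) < α * (α - 1) := by nlinarith
  have hc'0 : (0:ℝ) < (α / 2) * (α / 2 - 1) := by nlinarith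
  set K : ℝ≥0∞ := ENNReal.ofReal (ε * (α * (α - 1))) + 1 with hKdef
  have hKne : K ≠ ∞ := by simp [hKdef]
  have hK1 : 1 ≤ K := le_add_self
  -- hypotheses rewritten
  have hbound : ∀ (I : ℝ≥0∞),
      (I - 1) / ENNReal.ofReal (α * (α - 1)) ≤ ENNReal.ofReal ε → I ≤ K := by
    intro I hI
    have h1 : I - 1 ≤ ENNReal.ofReal ε * ENNReal.ofReal (α * (α - 1)) :=
      (ENNReal.div_le_iff (by simp [hc0]) (by simp)).mp hI
    rw [← ENNReal.ofReal_mul hε] at h1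
    calc I ≤ I - 1 + 1 := le_tsub_add
    _ ≤ ENNReal.ofReal (ε * (α * (α - 1))) + 1 := add_le_add_left h1 1
  have hA : (∫⁻ x, f x ^ α ∂ R) ≤ K := hbound _ hPR
  have hB : (∫⁻ x, g x ^ α ∂Q) ≤ K := hbound _ hRQ
  -- Step 1: decompose the rnDeriv
  have hstep1 : (∫⁻ x, (P.rnDeriv Q x) ^ (α / 2) ∂Q)
      = ∫⁻ x, (f x ^ (α/2) * g x ^ (1/2:ℝ)) * g x ^ (α/2 - 1/2) ∂Q := by
    refine lintegral_congr_ae ?_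
    filter_upwards [Measure.rnDeriv_mul_rnDeriv hPRac (κ := Q)] with x hx
    rw [← hx, Pi.mul_apply]
    rw [ENNReal.mul_rpow_of_nonneg _ _ (by positivity)]
    rw [mul_assoc, ← ENNReal.rpow_add_of_nonneg (x := R.rnDeriv Q x) (1/2) (α/2 - 1/2)
      (by norm_num) (by linarith)]
    congr 1
    ring
  -- Step 2: Cauchy-Schwarz
  have hconj2 : Real.HolderConjugate 2 2 := ⟨by norm_num, by norm_num, by norm_num⟩
  have hCS := ENNReal.lintegral_mul_le_Lp_mul_Lq Q hconj2
    (f := fun x => f x ^ (α/2) * g x ^ (1/2:ℝ)) (g := fun x => g x ^ (α/2 - 1/2))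
    ((hfm.pow_const _).mul (hgm.pow_const _)).aemeasurable
    (hgm.pow_const _).aemeasurable
  have hL : ∫⁻ x, ((fun x => f x ^ (α/2) * g x ^ (1/2:ℝ)) * fun x => g x ^ (α/2 - 1/2)) x ∂Q
      = ∫⁻ x, (P.rnDeriv Q x) ^ (α / 2) ∂Q := by rw [hstep1]; rfl
  have hR1 : (∫⁻ x, (f x ^ (α/2) * g x ^ (1/2:ℝ)) ^ (2:ℝ) ∂Q) = ∫⁻ x, f x ^ α ∂ R := by
    have : ∀ x, (f x ^ (α/2) * g x ^ (1/2:ℝ)) ^ (2:ℝ) = g x * f x ^ α := by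
      intro x
      rw [ENNReal.mul_rpow_of_nonneg _ _ (by norm_num), ← ENNReal.rpow_mul,
        ← ENNReal.rpow_mul]
      norm_num
      rw [mul_comm]
    simp_rw [this]
    exact lintegral_rnDeriv_mul hRQac (hfm.pow_const _).aemeasurable
  have hR2 : (∫⁻ x, (g x ^ (α/2 - 1/2)) ^ (2:ℝ) ∂Q) = ∫⁻ x, g x ^ (α - 1) ∂Q := by
    congr 1 with x
    rw [← ENNReal.rpow_mul]
    ring_nf
  rw [hL, hR1, hR2] at hCS
  -- Step 3: Lyapunov: ∫ g^(α-1) ≤ (∫ g^α)^((α-1)/α)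
  have hα1 : (1:ℝ) < α := by linarith
  have hconj : Real.HolderConjugate (α / (α - 1)) α := by
    exact (Real.HolderConjugate.conjExponent hα1).symm
  have hLya : (∫⁻ x, g x ^ (α - 1) ∂Q) ≤ (∫⁻ x, g x ^ α ∂Q) ^ ((α-1)/α) := by
    have h := ENNReal.lintegral_mul_le_Lp_mul_Lq Q hconj
      (f := fun x => g x ^ (α - 1)) (g := fun _ => 1)
      (hgm.pow_const _).aemeasurable aemeasurable_const
    simp only [Pi.mul_apply, mul_one] at h
    have h1 : ∫⁻ x, (g x ^ (α-1)) ^ (α/(α-1)) ∂Q = ∫⁻ x, g x ^ α ∂Q := by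
      congr 1 with x
      rw [← ENNReal.rpow_mul]
      congr 1
      rw [mul_comm]
      exact div_mul_cancel₀ α (sub_ne_zero.mpr (by linarith))
    have h2 : (∫⁻ _x, (1:ℝ≥0∞) ^ α ∂Q) ^ (1/α) = 1 := by
      simp [ENNReal.one_rpow]
    rw [h1, h2, mul_one, one_div, inv_div] at h
    exact h
  -- Step 4: combine
  have hI : (∫⁻ x, (P.rnDeriv Q x) ^ (α / 2) ∂Q) ≤ K := by
    have h1 : (∫⁻ x, (P.rnDeriv Q x) ^ (α / 2) ∂Q)
        ≤ K ^ (1/2:ℝ) * (K ^ ((α-1)/α)) ^ (1/2:ℝ) := by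
      refine hCS.trans ?_
      gcongr
      exact hLya.trans (by gcongr)
    have h2 : K ^ (1/2:ℝ) * (K ^ ((α-1)/α)) ^ (1/2:ℝ) ≤ K := by
      rw [← ENNReal.rpow_mul,
        ← ENNReal.rpow_add_of_nonneg (x := K) (1/2) ((α-1)/α * (1/2)) (by norm_num)
          (mul_nonneg (div_nonneg (by linarith) (by linarith)) (by norm_num))]
      calc K ^ (1/2 + (α-1)/α * (1/2)) ≤ K ^ (1:ℝ) := by
            apply ENNReal.rpow_le_rpow_of_exponent_le hK1
            have h3 : (α-1)/α ≤ 1 := by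
              rw [div_le_one (by linarith)]
              linarith
            nlinarith
      _ = K := ENNReal.rpow_one K
    exact h1.trans h2
  -- Step 5: conclude
  have hsub : (∫⁻ x, (P.rnDeriv Q x) ^ (α / 2) ∂Q) - 1
      ≤ ENNReal.ofReal (ε * (α * (α - 1))) := by
    rw [tsub_le_iff_right]; exact hI
  calc ((∫⁻ x, (P.rnDeriv Q x) ^ (α / 2) ∂Q) - 1) / ENNReal.ofReal ((α / 2) * (α / 2 - 1))
      ≤ ENNReal.ofReal (ε * (α * (α - 1))) / ENNReal.ofReal ((α / 2) * (α / 2 - 1)) :=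
        ENNReal.div_le_div_right hsub _
  _ = ENNReal.ofReal ((α * (α - 1)) / ((α / 2) * (α / 2 - 1)) * ε) := by
      rw [← ENNReal.ofReal_div_of_pos hc'0]
      congr 1
      ring
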